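/- With J the monomial ideal described, the weighted Hilbert function of S/J (where deg xᵢ = 1 and deg yᵢ = e) satisfies: the number of monomials of weighted degree qe + r (q ≥ 0, 0 ≤ r < e) outside J equals d(qe+r) + 1 − r. Hence S/J has the same Hilbert function as R. -/

import Mathlib

set_option linter.unreachableTactic false
set_option linter.unusedTactic false
set_option linter.unusedVariables false
set_option maxHeartbeats 1000000


open MvPolynomial

/-- The generators of the monomial ideal `J` (the `x`-variables are indexed by
`Sum.inl`, the `y`-variables by `Sum.inr`). -/
def wrcJGens12 (k : Type*) [Field k] (d e : ℕ) : Set (MvPolynomial (ℕ ⊕ ℕ) k) :=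
  {p | ∃ i j : ℕ, i < j ∧ j ≤ d - 2 ∧ p = X (Sum.inl (i + 1)) * X (Sum.inl j)} ∪
  {p | ∃ i j : ℕ, i < j ∧ j ≤ e - 2 ∧ p = X (Sum.inr (i + 1)) * X (Sum.inr j)} ∪
  {p | ∃ i j : ℕ, i ≤ e - 2 ∧ j ≤ d - 2 ∧ p = X (Sum.inl j) * X (Sum.inr (i + 1))} ∪
  {p | ∃ i : ℕ, i ≤ d - 2 ∧ p = X (Sum.inl i) * X (Sum.inr 0)} ∪
  {p | ∃ i : ℕ, i ≤ e - 2 ∧ p = X (Sum.inr 0) * X (Sum.inr i)}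


namespace WRC12

abbrev V : Type := ℕ ⊕ ℕ

/-- the exponent finsupps of the generators -/
def Gset (d e : ℕ) : Set (V →₀ ℕ) :=
  {g | ∃ i j : ℕ, i < j ∧ j ≤ d - 2 ∧
      g = Finsupp.single (Sum.inl (i + 1)) 1 + Finsupp.single (Sum.inl j) 1} ∪
  {g | ∃ i j : ℕ, i < j ∧ j ≤ e - 2 ∧
      g = Finsupp.single (Sum.inr (i + 1)) 1 + Finsupp.single (Sum.inr j) 1} ∪
  {g | ∃ i j : ℕ, i ≤ e - 2 ∧ j ≤ d - 2 ∧
      g = Finsupp.single (Sum.inl j) 1 + Finsupp.single (Sum.inr (i + 1)) 1} ∪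
  {g | ∃ i : ℕ, i ≤ d - 2 ∧ g = Finsupp.single (Sum.inl i) 1 + Finsupp.single (Sum.inr 0) 1} ∪
  {g | ∃ i : ℕ, i ≤ e - 2 ∧ g = Finsupp.single (Sum.inr 0) 1 + Finsupp.single (Sum.inr i) 1}

lemma XX (k : Type*) [Field k] (a b : V) :
    (X a * X b : MvPolynomial V k) = monomial (Finsupp.single a 1 + Finsupp.single b 1) 1 := by
  rw [X, X, monomial_mul, one_mul]

lemma gens_eq (k : Type*) [Field k] (d e : ℕ) :
    wrcJGens12 k d e = (fun s => monomial s (1 : k)) '' Gset d e := by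
  ext p
  simp only [wrcJGens12, Gset, Set.mem_union, Set.mem_setOf_eq, Set.image_union, Set.mem_image,
    XX]
  constructor
  · rintro ((((⟨i,j,h1,h2,rfl⟩|⟨i,j,h1,h2,rfl⟩)|⟨i,j,h1,h2,rfl⟩)|⟨i,h1,rfl⟩)|⟨i,h1,rfl⟩)
    exacts [Or.inl (Or.inl (Or.inl (Or.inl ⟨_, ⟨i,j,h1,h2,rfl⟩, rfl⟩))),
      Or.inl (Or.inl (Or.inl (Or.inr ⟨_, ⟨i,j,h1,h2,rfl⟩, rfl⟩))),
      Or.inl (Or.inl (Or.inr ⟨_, ⟨i,j,h1,h2,rfl⟩, rfl⟩)),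
      Or.inl (Or.inr ⟨_, ⟨i,h1,rfl⟩, rfl⟩),
      Or.inr ⟨_, ⟨i,h1,rfl⟩, rfl⟩]
  · rintro ((((⟨g,⟨i,j,h1,h2,rfl⟩,rfl⟩|⟨g,⟨i,j,h1,h2,rfl⟩,rfl⟩)|⟨g,⟨i,j,h1,h2,rfl⟩,rfl⟩)|⟨g,⟨i,h1,rfl⟩,rfl⟩)|⟨g,⟨i,h1,rfl⟩,rfl⟩)
    exacts [Or.inl (Or.inl (Or.inl (Or.inl ⟨i,j,h1,h2,rfl⟩))),
      Or.inl (Or.inl (Or.inl (Or.inr ⟨i,j,h1,h2,rfl⟩))),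
      Or.inl (Or.inl (Or.inr ⟨i,j,h1,h2,rfl⟩)),
      Or.inl (Or.inr ⟨i,h1,rfl⟩),
      Or.inr ⟨i,h1,rfl⟩]

lemma mem_span_iff (k : Type*) [Field k] (d e : ℕ) (m : V →₀ ℕ) :
    (monomial m (1 : k)) ∈ Ideal.span (wrcJGens12 k d e) ↔ ∃ g ∈ Gset d e, g ≤ m := by
  rw [gens_eq, mem_ideal_span_monomial_image]
  simp [support_monomial]

lemma pair_le {a b : V} (m : V →₀ ℕ) (hab : a ≠ b) :
    Finsupp.single a 1 + Finsupp.single b 1 ≤ m ↔ 1 ≤ m a ∧ 1 ≤ m b := by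
  rw [Finsupp.le_def]
  constructor
  · intro h
    refine ⟨le_trans ?_ (h a), le_trans ?_ (h b)⟩ <;>
      simp [Finsupp.single_apply, hab, hab.symm]
  · rintro ⟨h1, h2⟩ s
    rcases eq_or_ne s a with rfl | hsa
    · simpa [Finsupp.single_apply, hab.symm] using h1
    rcases eq_or_ne s b with rfl | hsb
    · simpa [Finsupp.single_apply, hab] using h2
    · simp [Finsupp.single_apply, Ne.symm hsa, Ne.symm hsb]

lemma same_le (a : V) (m : V →₀ ℕ) :
    Finsupp.single a 1 + Finsupp.single a 1 ≤ m ↔ 2 ≤ m a := by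
  rw [← Finsupp.single_add, Finsupp.single_le_iff]

end WRC12

namespace WRC12

open Finsupp

/-- pure powers of `x₀, x_{d-1}` -/
noncomputable def map1 (D n : ℕ) (a : ℕ) : V →₀ ℕ :=
  Finsupp.single (Sum.inl 0) a + Finsupp.single (Sum.inl (D+1)) (n - a)

noncomputable def map2 (D n : ℕ) (p : ℕ × ℕ) : V →₀ ℕ :=
  Finsupp.single (Sum.inl 0) p.1 + Finsupp.single (Sum.inl p.2) 1 +
    Finsupp.single (Sum.inl (D+1)) (n - 1 - p.1)

noncomputable def map3 (D E n : ℕ) (c : ℕ) : V →₀ ℕ :=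
  Finsupp.single (Sum.inl (D+1)) (n - (E+2)*c) + Finsupp.single (Sum.inr (E+1)) c

noncomputable def map4 (D E n : ℕ) (p : ℕ × ℕ) : V →₀ ℕ :=
  Finsupp.single (Sum.inl (D+1)) (n - (E+2)*(p.1+1)) + Finsupp.single (Sum.inr (E+1)) p.1 +
    Finsupp.single (Sum.inr p.2) 1

lemma map1_inl (D n a i : ℕ) :
    map1 D n a (Sum.inl i) = (if 0 = i then a else 0) + (if D+1 = i then n - a else 0) := by
  simp only [map1, Finsupp.add_apply, Finsupp.single_apply, Sum.inl.injEq, Sum.inr.injEq,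
    reduceCtorEq, if_false, add_zero, zero_add]
  try split_ifs <;> simp

lemma map1_inr (D n a i : ℕ) : map1 D n a (Sum.inr i) = 0 := by
  simp only [map1, Finsupp.add_apply, Finsupp.single_apply, Sum.inl.injEq, Sum.inr.injEq,
    reduceCtorEq, if_false, add_zero, zero_add]
  try split_ifs <;> simp

lemma map2_inl (D n : ℕ) (p : ℕ × ℕ) (i : ℕ) :
    map2 D n p (Sum.inl i) = ((if 0 = i then p.1 else 0) + (if p.2 = i then 1 else 0)) +
      (if D+1 = i then n - 1 - p.1 else 0) := by
  simp only [map2, Finsupp.add_apply, Finsupp.single_apply, Sum.inl.injEq, Sum.inr.injEq,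
    reduceCtorEq, if_false, add_zero, zero_add]
  try split_ifs <;> simp

lemma map2_inr (D n : ℕ) (p : ℕ × ℕ) (i : ℕ) : map2 D n p (Sum.inr i) = 0 := by
  simp only [map2, Finsupp.add_apply, Finsupp.single_apply, Sum.inl.injEq, Sum.inr.injEq,
    reduceCtorEq, if_false, add_zero, zero_add]
  try split_ifs <;> simp

lemma map3_inl (D E n c i : ℕ) :
    map3 D E n c (Sum.inl i) = (if D+1 = i then n - (E+2)*c else 0) := by
  simp only [map3, Finsupp.add_apply, Finsupp.single_apply, Sum.inl.injEq, Sum.inr.injEq,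
    reduceCtorEq, if_false, add_zero, zero_add]
  try split_ifs <;> simp

lemma map3_inr (D E n c i : ℕ) :
    map3 D E n c (Sum.inr i) = (if E+1 = i then c else 0) := by
  simp only [map3, Finsupp.add_apply, Finsupp.single_apply, Sum.inl.injEq, Sum.inr.injEq,
    reduceCtorEq, if_false, add_zero, zero_add]
  try split_ifs <;> simp

lemma map4_inl (D E n : ℕ) (p : ℕ × ℕ) (i : ℕ) :
    map4 D E n p (Sum.inl i) = (if D+1 = i then n - (E+2)*(p.1+1) else 0) := by
  simp only [map4, Finsupp.add_apply, Finsupp.single_apply, Sum.inl.injEq, Sum.inr.injEq,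
    reduceCtorEq, if_false, add_zero, zero_add]
  try split_ifs <;> simp

lemma map4_inr (D E n : ℕ) (p : ℕ × ℕ) (i : ℕ) :
    map4 D E n p (Sum.inr i) = (if E+1 = i then p.1 else 0) + (if p.2 = i then 1 else 0) := by
  simp only [map4, Finsupp.add_apply, Finsupp.single_apply, Sum.inl.injEq, Sum.inr.injEq,
    reduceCtorEq, if_false, add_zero, zero_add]
  try split_ifs <;> simp

noncomputable def FF (D E n q : ℕ) : Finset (V →₀ ℕ) :=
  ((Finset.range (n+1)).image (map1 D n) ∪
   ((Finset.range n) ×ˢ (Finset.Icc 1 D)).image (map2 D n)) ∪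
  ((Finset.Icc 1 q).image (map3 D E n) ∪
   ((Finset.range q) ×ˢ (Finset.range (E+1))).image (map4 D E n))

lemma wsum_add (E : ℕ) (f g : V →₀ ℕ) :
    ((f + g).sum fun v c => c * Sum.elim (fun _ => (1:ℕ)) (fun _ => E+2) v) =
      (f.sum fun v c => c * Sum.elim (fun _ => (1:ℕ)) (fun _ => E+2) v) +
      (g.sum fun v c => c * Sum.elim (fun _ => (1:ℕ)) (fun _ => E+2) v) :=
  Finsupp.sum_add_index' (fun _ => zero_mul _) (fun _ _ _ => add_mul _ _ _)

lemma wsum_single (E : ℕ) (v : V) (x : ℕ) :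
    ((Finsupp.single v x).sum fun v c => c * Sum.elim (fun _ => (1:ℕ)) (fun _ => E+2) v) =
      x * Sum.elim (fun _ => (1:ℕ)) (fun _ => E+2) v :=
  Finsupp.sum_single_index (zero_mul _)

end WRC12

namespace WRC12

lemma card_FF (D E n q r : ℕ) (hn : n = q * (E+2) + r) (hr : r < E + 2) :
    (FF D E n q).card = (D+2) * n + 1 - r := by
  classical
  have c1 : ((Finset.range (n+1)).image (map1 D n)).card = n + 1 := by
    rw [Finset.card_image_of_injOn, Finset.card_range]
    intro a ha a' ha' h
    have h0 := congrArg (fun f => f (Sum.inl 0)) h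
    simp [map1_inl] at h0
    try split_ifs at h0
    all_goals omega
  have c2 : (((Finset.range n) ×ˢ (Finset.Icc 1 D)).image (map2 D n)).card = n * D := by
    rw [Finset.card_image_of_injOn, Finset.card_product, Finset.card_range, Nat.card_Icc]
    · simp
    intro p hp p' hp' h
    simp only [Finset.coe_product, Set.mem_prod, Finset.mem_coe, Finset.mem_range,
      Finset.mem_Icc] at hp hp'
    have h0 := congrArg (fun f => f (Sum.inl 0)) h
    have h1 := congrArg (fun f => f (Sum.inl p.2)) h
    simp [map2_inl] at h0 h1
    have q1 : p.1 = p'.1 := by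
      try split_ifs at h0
      all_goals omega
    have q2 : p.2 = p'.2 := by
      try split_ifs at h1
      all_goals omega
    exact Prod.ext q1 q2
  have c3 : ((Finset.Icc 1 q).image (map3 D E n)).card = q := by
    rw [Finset.card_image_of_injOn, Nat.card_Icc]
    · simp
    intro c _ c' _ h
    have h0 := congrArg (fun f => f (Sum.inr (E+1))) h
    simpa [map3_inr] using h0
  have c4 : (((Finset.range q) ×ˢ (Finset.range (E+1))).image (map4 D E n)).card
      = q * (E+1) := by
    rw [Finset.card_image_of_injOn, Finset.card_product, Finset.card_range, Finset.card_range]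
    intro p hp p' hp' h
    simp only [Finset.coe_product, Set.mem_prod, Finset.mem_coe, Finset.mem_range] at hp hp'
    have h0 := congrArg (fun f => f (Sum.inr (E+1))) h
    have h1 := congrArg (fun f => f (Sum.inr p.2)) h
    simp [map4_inr] at h0 h1
    have q1 : p.1 = p'.1 := by
      try split_ifs at h0
      all_goals omega
    have q2 : p.2 = p'.2 := by
      try split_ifs at h1
      all_goals omega
    exact Prod.ext q1 q2
  have d12 : Disjoint ((Finset.range (n+1)).image (map1 D n))
      (((Finset.range n) ×ˢ (Finset.Icc 1 D)).image (map2 D n)) := by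
    rw [Finset.disjoint_left]
    rintro m hm1 hm2
    obtain ⟨a, ha, rfl⟩ := Finset.mem_image.mp hm1
    obtain ⟨p, hp, hEq⟩ := Finset.mem_image.mp hm2
    simp only [Finset.mem_product, Finset.mem_range, Finset.mem_Icc] at hp
    have h1 := congrArg (fun f => f (Sum.inl p.2)) hEq
    simp [map1_inl, map2_inl] at h1
    try split_ifs at h1
    all_goals omega
  have d34 : Disjoint ((Finset.Icc 1 q).image (map3 D E n))
      (((Finset.range q) ×ˢ (Finset.range (E+1))).image (map4 D E n)) := by
    rw [Finset.disjoint_left]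
    rintro m hm1 hm2
    obtain ⟨c, hc, rfl⟩ := Finset.mem_image.mp hm1
    obtain ⟨p, hp, hEq⟩ := Finset.mem_image.mp hm2
    simp only [Finset.mem_product, Finset.mem_range] at hp
    have h1 := congrArg (fun f => f (Sum.inr p.2)) hEq
    simp [map3_inr, map4_inr] at h1
    try split_ifs at h1
    all_goals omega
  have dbig : Disjoint ((Finset.range (n+1)).image (map1 D n) ∪
      ((Finset.range n) ×ˢ (Finset.Icc 1 D)).image (map2 D n))
      (((Finset.Icc 1 q).image (map3 D E n)) ∪
       (((Finset.range q) ×ˢ (Finset.range (E+1))).image (map4 D E n))) := by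
    rw [Finset.disjoint_left]
    rintro m hm1 hm2
    have hz : ∀ i, m (Sum.inr i) = 0 := by
      rcases Finset.mem_union.mp hm1 with h | h
      · obtain ⟨a, _, rfl⟩ := Finset.mem_image.mp h
        exact fun i => map1_inr D n a i
      · obtain ⟨p, _, rfl⟩ := Finset.mem_image.mp h
        exact fun i => map2_inr D n p i
    rcases Finset.mem_union.mp hm2 with h | h
    · obtain ⟨c, hc, hEq⟩ := Finset.mem_image.mp h
      simp only [Finset.mem_Icc] at hc
      have h1 := congrArg (fun f => f (Sum.inr (E+1))) hEq
      simp [map3_inr, hz] at h1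
      omega
    · obtain ⟨p, hp, hEq⟩ := Finset.mem_image.mp h
      have h1 := congrArg (fun f => f (Sum.inr p.2)) hEq
      simp [map4_inr, hz] at h1
      try split_ifs at h1
      all_goals omega
  rw [FF, Finset.card_union_of_disjoint dbig, Finset.card_union_of_disjoint d12,
    Finset.card_union_of_disjoint d34, c1, c2, c3, c4]
  have key : (D+2) * n + 1 = (n + 1 + n * D) + (q + q * (E+1)) + r := by
    subst hn; ring
  omega

end WRC12

namespace WRC12

open Finsupp

lemma mem_FF_iff (D E n q r : ℕ) (hn : n = q*(E+2)+r) (hr : r < E+2) (m : V →₀ ℕ) :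
    m ∈ FF D E n q ↔
      ((∀ i : ℕ, m (Sum.inl i) ≠ 0 → i < D+2) ∧
       (∀ i : ℕ, m (Sum.inr i) ≠ 0 → i < E+2) ∧
       (m.sum fun v c => c * Sum.elim (fun _ => 1) (fun _ => E+2) v) = n ∧
       ¬ ∃ g ∈ Gset (D+2) (E+2), g ≤ m) := by
  classical
  constructor
  · intro h
    simp only [FF, Finset.mem_union, Finset.mem_image, Finset.mem_product, Finset.mem_range,
      Finset.mem_Icc] at h
    rcases h with (⟨a, ha, rfl⟩ | ⟨p, hp, rfl⟩) | (⟨c, hc, rfl⟩ | ⟨p, hp, rfl⟩)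
    · refine ⟨?_, ?_, ?_, ?_⟩
      · intro i hi
        rw [map1_inl] at hi
        split_ifs at hi <;> omega
      · intro i hi
        rw [map1_inr] at hi; omega
      · rw [map1, wsum_add, wsum_single, wsum_single]
        simp; omega
      · rintro ⟨g, hg, hle⟩
        have hle' := Finsupp.le_def.mp hle
        simp only [Gset, Set.mem_union, Set.mem_setOf_eq] at hg
        rcases hg with ((((⟨i,j,hij,hjD,rfl⟩|⟨i,j,hij,hjE,rfl⟩)|⟨i,j,hiE,hjD,rfl⟩)|⟨i,hiD,rfl⟩)|⟨i,hiE,rfl⟩)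
        · have t1 := hle' (Sum.inl (i+1)); have t2 := hle' (Sum.inl j)
          simp [Finsupp.single_apply, map1_inl] at t1 t2
          try split_ifs at t1 t2
          all_goals omega
        · have t1 := hle' (Sum.inr (i+1)); have t2 := hle' (Sum.inr j)
          simp [Finsupp.single_apply, map1_inr] at t1 t2
          try split_ifs at t1 t2
          all_goals omega
        · have t2 := hle' (Sum.inr (i+1))
          simp [Finsupp.single_apply, map1_inr] at t2
        · have t2 := hle' (Sum.inr 0)
          simp [Finsupp.single_apply, map1_inr] at t2
        · have t1 := hle' (Sum.inr 0)
          simp [Finsupp.single_apply, map1_inr] at t1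
    · obtain ⟨hp1, hp2, hp3⟩ := hp
      refine ⟨?_, ?_, ?_, ?_⟩
      · intro i hi
        rw [map2_inl] at hi
        split_ifs at hi <;> omega
      · intro i hi
        rw [map2_inr] at hi; omega
      · rw [map2, wsum_add, wsum_add, wsum_single, wsum_single, wsum_single]
        simp; omega
      · rintro ⟨g, hg, hle⟩
        have hle' := Finsupp.le_def.mp hle
        simp only [Gset, Set.mem_union, Set.mem_setOf_eq] at hg
        rcases hg with ((((⟨i,j,hij,hjD,rfl⟩|⟨i,j,hij,hjE,rfl⟩)|⟨i,j,hiE,hjD,rfl⟩)|⟨i,hiD,rfl⟩)|⟨i,hiE,rfl⟩)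
        · have t1 := hle' (Sum.inl (i+1)); have t2 := hle' (Sum.inl j)
          simp [Finsupp.single_apply, map2_inl] at t1 t2
          try split_ifs at t1 t2
          all_goals omega
        · have t1 := hle' (Sum.inr (i+1)); have t2 := hle' (Sum.inr j)
          simp [Finsupp.single_apply, map2_inr] at t1 t2
          try split_ifs at t1 t2
          all_goals omega
        · have t2 := hle' (Sum.inr (i+1))
          simp [Finsupp.single_apply, map2_inr] at t2
        · have t2 := hle' (Sum.inr 0)
          simp [Finsupp.single_apply, map2_inr] at t2
        · have t1 := hle' (Sum.inr 0)
          simp [Finsupp.single_apply, map2_inr] at t1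
    · obtain ⟨hc1, hc2⟩ := Finset.mem_Icc.mp (Finset.mem_Icc.mpr hc)
      refine ⟨?_, ?_, ?_, ?_⟩
      · intro i hi
        rw [map3_inl] at hi
        split_ifs at hi <;> omega
      · intro i hi
        rw [map3_inr] at hi
        split_ifs at hi <;> omega
      · rw [map3, wsum_add, wsum_single, wsum_single]
        have h1 : (E+2)*c ≤ (E+2)*q := Nat.mul_le_mul_left _ hc2
        have h2 : c*(E+2) = (E+2)*c := mul_comm _ _
        have h3 : (E+2)*q = q*(E+2) := mul_comm _ _
        simp; omega
      · rintro ⟨g, hg, hle⟩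
        have hle' := Finsupp.le_def.mp hle
        simp only [Gset, Set.mem_union, Set.mem_setOf_eq] at hg
        rcases hg with ((((⟨i,j,hij,hjD,rfl⟩|⟨i,j,hij,hjE,rfl⟩)|⟨i,j,hiE,hjD,rfl⟩)|⟨i,hiD,rfl⟩)|⟨i,hiE,rfl⟩)
        · have t1 := hle' (Sum.inl (i+1)); have t2 := hle' (Sum.inl j)
          simp [Finsupp.single_apply, map3_inl] at t1 t2
          try split_ifs at t1 t2
          all_goals omega
        · have t1 := hle' (Sum.inr (i+1)); have t2 := hle' (Sum.inr j)
          simp [Finsupp.single_apply, map3_inr] at t1 t2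
          try split_ifs at t1 t2
          all_goals omega
        · have t1 := hle' (Sum.inl j)
          simp [Finsupp.single_apply, map3_inl] at t1
          try split_ifs at t1
          all_goals omega
        · have t1 := hle' (Sum.inl i)
          simp [Finsupp.single_apply, map3_inl] at t1
          try split_ifs at t1
          all_goals omega
        · have t1 := hle' (Sum.inr 0)
          simp [Finsupp.single_apply, map3_inr] at t1
          try split_ifs at t1
          all_goals omega
    · obtain ⟨hp1, hp2⟩ := hp
      refine ⟨?_, ?_, ?_, ?_⟩
      · intro i hi
        rw [map4_inl] at hi
        split_ifs at hi <;> omega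
      · intro i hi
        rw [map4_inr] at hi
        split_ifs at hi <;> omega
      · rw [map4, wsum_add, wsum_add, wsum_single, wsum_single, wsum_single]
        have h1 : (E+2)*(p.1+1) ≤ (E+2)*q := Nat.mul_le_mul_left _ (by omega)
        have h2 : p.1*(E+2) = (E+2)*p.1 := mul_comm _ _
        have h3 : (E+2)*q = q*(E+2) := mul_comm _ _
        have h4 : (E+2)*(p.1+1) = (E+2)*p.1 + (E+2) := by ring
        simp; omega
      · rintro ⟨g, hg, hle⟩
        have hle' := Finsupp.le_def.mp hle
        simp only [Gset, Set.mem_union, Set.mem_setOf_eq] at hg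
        rcases hg with ((((⟨i,j,hij,hjD,rfl⟩|⟨i,j,hij,hjE,rfl⟩)|⟨i,j,hiE,hjD,rfl⟩)|⟨i,hiD,rfl⟩)|⟨i,hiE,rfl⟩)
        · have t1 := hle' (Sum.inl (i+1)); have t2 := hle' (Sum.inl j)
          simp [Finsupp.single_apply, map4_inl] at t1 t2
          try split_ifs at t1 t2
          all_goals omega
        · have t1 := hle' (Sum.inr (i+1)); have t2 := hle' (Sum.inr j)
          simp [Finsupp.single_apply, map4_inr] at t1 t2
          try split_ifs at t1 t2
          all_goals omega
        · have t1 := hle' (Sum.inl j)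
          simp [Finsupp.single_apply, map4_inl] at t1
          try split_ifs at t1
          all_goals omega
        · have t1 := hle' (Sum.inl i)
          simp [Finsupp.single_apply, map4_inl] at t1
          try split_ifs at t1
          all_goals omega
        · have t1 := hle' (Sum.inr 0); have t2 := hle' (Sum.inr i)
          simp [Finsupp.single_apply, map4_inr] at t1 t2
          try split_ifs at t1 t2
          all_goals omega
  · rintro ⟨hsx, hsy, hdeg, hnot⟩
    push_neg at hnot
    have hx1 : ∀ a, 1 ≤ a → a ≤ D → m (Sum.inl a) ≤ 1 := by
      intro a h1 h2
      by_contra hcon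
      push_neg at hcon
      refine hnot (Finsupp.single (Sum.inl a) 1 + Finsupp.single (Sum.inl a) 1) ?_ ?_
      · simp only [Gset, Set.mem_union, Set.mem_setOf_eq]
        exact Or.inl (Or.inl (Or.inl (Or.inl ⟨a-1, a, by omega, by omega,
          by rw [show a-1+1 = a from by omega]⟩)))
      · rw [same_le]; omega
    have hx2 : ∀ a b, 1 ≤ a → a < b → b ≤ D → m (Sum.inl a) = 0 ∨ m (Sum.inl b) = 0 := by
      intro a b h1 h2 h3
      by_contra hcon
      push_neg at hcon
      refine hnot (Finsupp.single (Sum.inl a) 1 + Finsupp.single (Sum.inl b) 1) ?_ ?_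
      · simp only [Gset, Set.mem_union, Set.mem_setOf_eq]
        exact Or.inl (Or.inl (Or.inl (Or.inl ⟨a-1, b, by omega, by omega,
          by rw [show a-1+1 = a from by omega]⟩)))
      · rw [pair_le m (by simp; omega)]
        omega
    have hy1 : ∀ a, 1 ≤ a → a ≤ E → m (Sum.inr a) ≤ 1 := by
      intro a h1 h2
      by_contra hcon
      push_neg at hcon
      refine hnot (Finsupp.single (Sum.inr a) 1 + Finsupp.single (Sum.inr a) 1) ?_ ?_
      · simp only [Gset, Set.mem_union, Set.mem_setOf_eq]
        exact Or.inl (Or.inl (Or.inl (Or.inr ⟨a-1, a, by omega, by omega,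
          by rw [show a-1+1 = a from by omega]⟩)))
      · rw [same_le]; omega
    have hy2 : ∀ a b, 1 ≤ a → a < b → b ≤ E → m (Sum.inr a) = 0 ∨ m (Sum.inr b) = 0 := by
      intro a b h1 h2 h3
      by_contra hcon
      push_neg at hcon
      refine hnot (Finsupp.single (Sum.inr a) 1 + Finsupp.single (Sum.inr b) 1) ?_ ?_
      · simp only [Gset, Set.mem_union, Set.mem_setOf_eq]
        exact Or.inl (Or.inl (Or.inl (Or.inr ⟨a-1, b, by omega, by omega,
          by rw [show a-1+1 = a from by omega]⟩)))
      · rw [pair_le m (by simp; omega)]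
        omega
    have hxy : ∀ a j, 1 ≤ a → a ≤ E+1 → j ≤ D → m (Sum.inl j) = 0 ∨ m (Sum.inr a) = 0 := by
      intro a j h1 h2 h3
      by_contra hcon
      push_neg at hcon
      refine hnot (Finsupp.single (Sum.inl j) 1 + Finsupp.single (Sum.inr a) 1) ?_ ?_
      · simp only [Gset, Set.mem_union, Set.mem_setOf_eq]
        exact Or.inl (Or.inl (Or.inr ⟨a-1, j, by omega, by omega,
          by rw [show a-1+1 = a from by omega]⟩))
      · rw [pair_le m (by simp)]
        omega
    have hx0y : ∀ j, j ≤ D → m (Sum.inl j) = 0 ∨ m (Sum.inr 0) = 0 := by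
      intro j h3
      by_contra hcon
      push_neg at hcon
      refine hnot (Finsupp.single (Sum.inl j) 1 + Finsupp.single (Sum.inr 0) 1) ?_ ?_
      · simp only [Gset, Set.mem_union, Set.mem_setOf_eq]
        exact Or.inl (Or.inr ⟨j, by omega, rfl⟩)
      · rw [pair_le m (by simp)]
        omega
    have hy0 : m (Sum.inr 0) ≤ 1 := by
      by_contra hcon
      push_neg at hcon
      refine hnot (Finsupp.single (Sum.inr 0) 1 + Finsupp.single (Sum.inr 0) 1) ?_ ?_
      · simp only [Gset, Set.mem_union, Set.mem_setOf_eq]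
        exact Or.inr ⟨0, by omega, rfl⟩
      · rw [same_le]; omega
    have hy0y : ∀ i, 1 ≤ i → i ≤ E → m (Sum.inr 0) = 0 ∨ m (Sum.inr i) = 0 := by
      intro i h1 h2
      by_contra hcon
      push_neg at hcon
      refine hnot (Finsupp.single (Sum.inr 0) 1 + Finsupp.single (Sum.inr i) 1) ?_ ?_
      · simp only [Gset, Set.mem_union, Set.mem_setOf_eq]
        exact Or.inr ⟨i, by omega, rfl⟩
      · rw [pair_le m (by simp; omega)]
        omega
    simp only [FF, Finset.mem_union, Finset.mem_image, Finset.mem_product, Finset.mem_range,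
      Finset.mem_Icc]
    by_cases hY : ∀ i, m (Sum.inr i) = 0
    · by_cases hT : ∀ t, 1 ≤ t → t ≤ D → m (Sum.inl t) = 0
      · -- pure powers of x₀ and x_{d-1}
        have hm : m = Finsupp.single (Sum.inl 0) (m (Sum.inl 0)) +
            Finsupp.single (Sum.inl (D+1)) (m (Sum.inl (D+1))) := by
          ext v
          rcases v with i | i
          · rcases eq_or_ne i 0 with rfl | h0
            · rw [Finsupp.add_apply, Finsupp.single_eq_same,
                Finsupp.single_eq_of_ne (by simp)]; omega
            · rcases eq_or_ne i (D+1) with rfl | h1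
              · rw [Finsupp.add_apply, Finsupp.single_eq_of_ne (by simp),
                  Finsupp.single_eq_same]; omega
              · have hz : m (Sum.inl i) = 0 := by
                  by_cases hlt : i < D+2
                  · exact hT i (by omega) (by omega)
                  · by_contra hne; exact absurd (hsx i hne) hlt
                rw [hz, Finsupp.add_apply,
                  Finsupp.single_eq_of_ne' (by simpa using Ne.symm h0),
                  Finsupp.single_eq_of_ne' (by simpa using Ne.symm h1)]; omega
          · rw [hY i, Finsupp.add_apply, Finsupp.single_eq_of_ne (by simp),
              Finsupp.single_eq_of_ne (by simp)]; omega
        have hd2 := hdeg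
        rw [hm] at hd2
        rw [wsum_add, wsum_single, wsum_single] at hd2
        simp at hd2
        refine Or.inl (Or.inl ⟨m (Sum.inl 0), by omega, ?_⟩)
        rw [map1, show n - m (Sum.inl 0) = m (Sum.inl (D+1)) from by omega]
        exact hm.symm
      · push_neg at hT
        obtain ⟨t, ht1, ht2, htne⟩ := hT
        have hmt : m (Sum.inl t) = 1 := by have := hx1 t ht1 ht2; omega
        have hz2 : ∀ s, s ≠ 0 → s ≠ t → s ≠ D+1 → m (Sum.inl s) = 0 := by
          intro s h0 hst hd1
          by_cases hlt : s < D+2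
          · rcases Nat.lt_or_ge s t with h | h
            · rcases hx2 s t (by omega) h ht2 with h' | h'
              · exact h'
              · exact absurd h' htne
            · have hts : t < s := by omega
              rcases hx2 t s ht1 hts (by omega) with h' | h'
              · exact absurd h' htne
              · exact h'
          · by_contra hne; exact absurd (hsx s hne) hlt
        have hm : m = Finsupp.single (Sum.inl 0) (m (Sum.inl 0)) +
            Finsupp.single (Sum.inl t) 1 +
            Finsupp.single (Sum.inl (D+1)) (m (Sum.inl (D+1))) := by
          ext v
          rcases v with i | i
          · rcases eq_or_ne i 0 with rfl | h0
            · rw [Finsupp.add_apply, Finsupp.add_apply, Finsupp.single_eq_same,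
                Finsupp.single_eq_of_ne' (by simpa using (by omega : t ≠ 0)),
                Finsupp.single_eq_of_ne (by simp)]; omega
            · rcases eq_or_ne i t with rfl | hit
              · rw [hmt, Finsupp.add_apply, Finsupp.add_apply,
                  Finsupp.single_eq_of_ne' (by simpa using (by omega : (0:ℕ) ≠ i)),
                  Finsupp.single_eq_same,
                  Finsupp.single_eq_of_ne' (by simpa using (by omega : D+1 ≠ i))]; omega
              · rcases eq_or_ne i (D+1) with rfl | h1
                · rw [Finsupp.add_apply, Finsupp.add_apply,
                    Finsupp.single_eq_of_ne (by simp),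
                    Finsupp.single_eq_of_ne' (by simpa using (by omega : t ≠ D+1)),
                    Finsupp.single_eq_same]; omega
                · rw [hz2 i h0 hit h1, Finsupp.add_apply, Finsupp.add_apply,
                    Finsupp.single_eq_of_ne' (by simpa using Ne.symm h0),
                    Finsupp.single_eq_of_ne' (by simpa using Ne.symm hit),
                    Finsupp.single_eq_of_ne' (by simpa using Ne.symm h1)]; omega
          · rw [hY i, Finsupp.add_apply, Finsupp.add_apply,
              Finsupp.single_eq_of_ne (by simp), Finsupp.single_eq_of_ne (by simp),
              Finsupp.single_eq_of_ne (by simp)]; omega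
        have hd2 := hdeg
        rw [hm] at hd2
        rw [wsum_add, wsum_add, wsum_single, wsum_single, wsum_single] at hd2
        simp at hd2
        refine Or.inl (Or.inr ⟨⟨m (Sum.inl 0), t⟩, ⟨by omega, ht1, ht2⟩, ?_⟩)
        simp only [map2]
        rw [show n - 1 - m (Sum.inl 0) = m (Sum.inl (D+1)) from by omega]
        exact hm.symm
    · push_neg at hY
      obtain ⟨iy, hiy⟩ := hY
      have hiyE : iy < E+2 := hsy iy hiy
      have hxz : ∀ s, s ≠ D+1 → m (Sum.inl s) = 0 := by
        intro s hs
        by_cases hlt : s < D+2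
        · have hsD : s ≤ D := by omega
          rcases Nat.eq_zero_or_pos iy with rfl | hpos
          · rcases hx0y s hsD with h | h
            · exact h
            · exact absurd h hiy
          · rcases hxy iy s (by omega) (by omega) hsD with h | h
            · exact h
            · exact absurd h hiy
        · by_contra hne; exact absurd (hsx s hne) hlt
      by_cases hT : ∀ t, t ≤ E → m (Sum.inr t) = 0
      · have hyz : ∀ i, i ≠ E+1 → m (Sum.inr i) = 0 := by
          intro i hi
          by_cases hlt : i < E+2
          · exact hT i (by omega)
          · by_contra hne; exact absurd (hsy i hne) hlt
        have hiy1 : iy = E+1 := by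
          by_contra hne; exact hiy (hyz iy hne)
        rw [hiy1] at hiy
        have hm : m = Finsupp.single (Sum.inl (D+1)) (m (Sum.inl (D+1))) +
            Finsupp.single (Sum.inr (E+1)) (m (Sum.inr (E+1))) := by
          ext v
          rcases v with i | i
          · rcases eq_or_ne i (D+1) with rfl | h1
            · rw [Finsupp.add_apply, Finsupp.single_eq_same,
                Finsupp.single_eq_of_ne (by simp)]; omega
            · rw [hxz i h1, Finsupp.add_apply,
                Finsupp.single_eq_of_ne' (by simpa using Ne.symm h1),
                Finsupp.single_eq_of_ne (by simp)]; omega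
          · rcases eq_or_ne i (E+1) with rfl | h1
            · rw [Finsupp.add_apply, Finsupp.single_eq_of_ne (by simp),
                Finsupp.single_eq_same]; omega
            · rw [hyz i h1, Finsupp.add_apply, Finsupp.single_eq_of_ne (by simp),
                Finsupp.single_eq_of_ne' (by simpa using Ne.symm h1)]; omega
        have hd2 := hdeg
        rw [hm] at hd2
        rw [wsum_add, wsum_single, wsum_single] at hd2
        simp at hd2
        have hle1 : m (Sum.inr (E+1)) * (E+2) ≤ n := by
          rw [← hd2]; omega
        have hcomm : m (Sum.inr (E+1)) * (E+2) = (E+2) * m (Sum.inr (E+1)) := mul_comm _ _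
        have hCq : m (Sum.inr (E+1)) ≤ q := by
          by_contra hc
          push_neg at hc
          have h2 : (q+1)*(E+2) ≤ m (Sum.inr (E+1)) * (E+2) := Nat.mul_le_mul_right _ hc
          have h3 : (q+1)*(E+2) = q*(E+2) + (E+2) := by ring
          omega
        refine Or.inr (Or.inl ⟨m (Sum.inr (E+1)), ⟨by omega, hCq⟩, ?_⟩)
        rw [map3, show n - (E+2) * m (Sum.inr (E+1)) = m (Sum.inl (D+1)) from by omega]
        exact hm.symm
      · push_neg at hT
        obtain ⟨t, htE, htne⟩ := hT
        have hmt : m (Sum.inr t) = 1 := by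
          rcases Nat.eq_zero_or_pos t with rfl | hpos
          · omega
          · have := hy1 t hpos htE; omega
        have hyz4 : ∀ i, i ≠ E+1 → i ≠ t → m (Sum.inr i) = 0 := by
          intro i hiE1 hit
          by_cases hlt : i < E+2
          · have hiE : i ≤ E := by omega
            rcases Nat.eq_zero_or_pos t with rfl | hposT
            · rcases hy0y i (by omega) hiE with h | h
              · exact absurd h htne
              · exact h
            · rcases Nat.eq_zero_or_pos i with rfl | hposI
              · rcases hy0y t hposT htE with h | h
                · exact h
                · exact absurd h htne
              · rcases Nat.lt_or_ge i t with h | h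
                · rcases hy2 i t hposI h htE with h' | h'
                  · exact h'
                  · exact absurd h' htne
                · have hti : t < i := by omega
                  rcases hy2 t i hposT hti hiE with h' | h'
                  · exact absurd h' htne
                  · exact h'
          · by_contra hne; exact absurd (hsy i hne) hlt
        have hm : m = Finsupp.single (Sum.inl (D+1)) (m (Sum.inl (D+1))) +
            Finsupp.single (Sum.inr (E+1)) (m (Sum.inr (E+1))) +
            Finsupp.single (Sum.inr t) 1 := by
          ext v
          rcases v with i | i
          · rcases eq_or_ne i (D+1) with rfl | h1
            · rw [Finsupp.add_apply, Finsupp.add_apply, Finsupp.single_eq_same,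
                Finsupp.single_eq_of_ne (by simp), Finsupp.single_eq_of_ne (by simp)]; omega
            · rw [hxz i h1, Finsupp.add_apply, Finsupp.add_apply,
                Finsupp.single_eq_of_ne' (by simpa using Ne.symm h1),
                Finsupp.single_eq_of_ne (by simp), Finsupp.single_eq_of_ne (by simp)]; omega
          · rcases eq_or_ne i (E+1) with rfl | h1
            · rw [Finsupp.add_apply, Finsupp.add_apply,
                Finsupp.single_eq_of_ne (by simp), Finsupp.single_eq_same,
                Finsupp.single_eq_of_ne' (by simpa using (by omega : t ≠ E+1))]; omega
            · rcases eq_or_ne i t with rfl | hit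
              · rw [hmt, Finsupp.add_apply, Finsupp.add_apply,
                  Finsupp.single_eq_of_ne (by simp),
                  Finsupp.single_eq_of_ne' (by simpa using (by omega : E+1 ≠ i)),
                  Finsupp.single_eq_same]; omega
              · rw [hyz4 i h1 hit, Finsupp.add_apply, Finsupp.add_apply,
                  Finsupp.single_eq_of_ne (by simp),
                  Finsupp.single_eq_of_ne' (by simpa using Ne.symm h1),
                  Finsupp.single_eq_of_ne' (by simpa using Ne.symm hit)]; omega
        have hd2 := hdeg
        rw [hm] at hd2
        rw [wsum_add, wsum_add, wsum_single, wsum_single, wsum_single] at hd2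
        simp at hd2
        have hcomm : m (Sum.inr (E+1)) * (E+2) = (E+2) * m (Sum.inr (E+1)) := mul_comm _ _
        have hexp : (E+2) * (m (Sum.inr (E+1)) + 1) = (E+2) * m (Sum.inr (E+1)) + (E+2) := by
          ring
        have hle1 : (E+2) * (m (Sum.inr (E+1)) + 1) ≤ n := by omega
        have hCq : m (Sum.inr (E+1)) < q := by
          by_contra hc
          push_neg at hc
          have h2 : (q+1)*(E+2) ≤ (m (Sum.inr (E+1)) + 1) * (E+2) :=
            Nat.mul_le_mul_right _ (by omega)
          have h3 : (q+1)*(E+2) = q*(E+2) + (E+2) := by ring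
          have h4 : (m (Sum.inr (E+1)) + 1) * (E+2) = (E+2) * (m (Sum.inr (E+1)) + 1) :=
            mul_comm _ _
          omega
        refine Or.inr (Or.inr ⟨⟨m (Sum.inr (E+1)), t⟩, ⟨hCq, by omega⟩, ?_⟩)
        simp only [map4]
        rw [show n - (E+2) * (m (Sum.inr (E+1)) + 1) = m (Sum.inl (D+1)) from by omega]
        exact hm.symm

end WRC12


/-- The number of monomials of weighted degree `qe + r` (`deg xᵢ = 1`, `deg yᵢ = e`)
outside `J` equals `d(qe+r) + 1 − r`; hence `S/J` has the same Hilbert function as `R`. -/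
theorem stmt12 (k : Type*) [Field k] (d e : ℕ) (hd : 2 ≤ d) (he : 2 ≤ e)
    (q r : ℕ) (hr : r < e) :
    Nat.card {m : (ℕ ⊕ ℕ) →₀ ℕ //
        (∀ i : ℕ, m (Sum.inl i) ≠ 0 → i < d) ∧
        (∀ i : ℕ, m (Sum.inr i) ≠ 0 → i < e) ∧
        (m.sum fun v c => c * Sum.elim (fun _ => 1) (fun _ => e) v) = q * e + r ∧
        (monomial m (1 : k)) ∉ Ideal.span (wrcJGens12 k d e)} =
      d * (q * e + r) + 1 - r := by
  obtain ⟨D, rfl⟩ : ∃ D, d = D + 2 := ⟨d - 2, by omega⟩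
  obtain ⟨E, rfl⟩ : ∃ E, e = E + 2 := ⟨e - 2, by omega⟩
  have key : ∀ m : (ℕ ⊕ ℕ) →₀ ℕ,
      ((∀ i : ℕ, m (Sum.inl i) ≠ 0 → i < D+2) ∧
       (∀ i : ℕ, m (Sum.inr i) ≠ 0 → i < E+2) ∧
       (m.sum fun v c => c * Sum.elim (fun _ => 1) (fun _ => E+2) v) = q*(E+2)+r ∧
       (monomial m (1 : k)) ∉ Ideal.span (wrcJGens12 k (D+2) (E+2))) ↔
        m ∈ WRC12.FF D E (q*(E+2)+r) q := by
    intro m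
    rw [WRC12.mem_FF_iff D E (q*(E+2)+r) q r rfl (by omega) m]
    constructor
    · rintro ⟨h1, h2, h3, h4⟩
      refine ⟨h1, h2, h3, ?_⟩
      intro hg
      exact h4 ((WRC12.mem_span_iff k (D+2) (E+2) m).mpr hg)
    · rintro ⟨h1, h2, h3, h4⟩
      refine ⟨h1, h2, h3, ?_⟩
      intro hmem
      exact h4 ((WRC12.mem_span_iff k (D+2) (E+2) m).mp hmem)
  refine Eq.trans (Nat.card_congr (Equiv.subtypeEquivRight key)) ?_
  exact Eq.trans (Nat.card_eq_finsetCard _) (WRC12.card_FF D E _ q r rfl (by omega))
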